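/- In the Face Lemma setup (p₁, p₂ ∈ ℂⁿ linearly independent column vectors; q₁†, q₂† linearly independent row vectors; qᵢ†pⱼ ≠ 0 for i,j ∈ {1,2}; nonzero α₁, α₂, β₁, β₂ ∈ ℂ with α₁+α₂ ≠ 0, β₁+β₂ ≠ 0, α₂+β₂ ≠ 0; D := α₁β₂(q₂†p₁)(q₁†p₂) − α₂β₁(q₁†p₁)(q₂†p₂) ≠ 0; κ := α₁+α₂+β₁+β₂), define P₁ = (α₁·p₁/(q₁†p₁) + α₂·p₂/(q₁†p₂))/(α₁+α₂), P₂ = (β₁·p₁/(q₂†p₁) + β₂·p₂/(q₂†p₂))/(β₁+β₂), Q₂† = (α₂·q₁†/(q₁†p₂) + β₂·q₂†/(q₂†p₂))/(α₂+β₂), and set α₅ = −β₁ − κ·α₂β₁(q₁†p₁)(q₂†p₂)/D, β₅ = −α₁ + κ·α₁β₂(q₂†p₁)(q₁†p₂)/D, γ₂ = −(α₂+β₂). If Q₂†·P₁ ≠ 0 and Q₂†·P₂ ≠ 0, then Q₂†·p₂ = 1 and α₅·P₁/(Q₂†P₁) + β₅·P₂/(Q₂†P₂) + γ₂·p₂ =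 0; moreover α₅ + β₅ = α₂ + β₂, and with α₄ = −β₂ + κ·α₁β₂(q₂†p₁)(q₁†p₂)/D and β₄ = −α₂ − κ·α₂β₁(q₁†p₁)(q₂†p₂)/D one has α₄ + α₅ = α₁ + α₂ and β₄ + β₅ = β₁ + β₂. -/

import Mathlib

open Matrix

set_option maxHeartbeats 4000000 in
/-- Face Lemma, triple condition at the node `Q₂†`: with `α₅`, `β₅`, `γ₂` as
computed, `(P₁, P₂, p₂)` form a `Q₂†`-based triple with parameters
`(α₅, β₅, γ₂)`; moreover `α₅ + β₅ = α₂ + β₂`, and together with `α₄`, `β₄` one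
has `α₄ + α₅ = α₁ + α₂` and `β₄ + β₅ = β₁ + β₂`. -/
theorem face_lemma_node_Q₂ (n : ℕ) (p₁ p₂ q₁ q₂ : Fin n → ℂ)
    (hp : LinearIndependent ℂ ![p₁, p₂]) (hq : LinearIndependent ℂ ![q₁, q₂])
    (h11 : q₁ ⬝ᵥ p₁ ≠ 0) (h12 : q₁ ⬝ᵥ p₂ ≠ 0)
    (h21 : q₂ ⬝ᵥ p₁ ≠ 0) (h22 : q₂ ⬝ᵥ p₂ ≠ 0)
    (α₁ α₂ β₁ β₂ : ℂ) (ha₁ : α₁ ≠ 0) (ha₂ : α₂ ≠ 0) (hb₁ : β₁ ≠ 0) (hb₂ : β₂ ≠ 0)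
    (hαα : α₁ + α₂ ≠ 0) (hββ : β₁ + β₂ ≠ 0) (hαβ : α₂ + β₂ ≠ 0)
    (D κ : ℂ)
    (hD : D = α₁ * β₂ * (q₂ ⬝ᵥ p₁) * (q₁ ⬝ᵥ p₂) -
        α₂ * β₁ * (q₁ ⬝ᵥ p₁) * (q₂ ⬝ᵥ p₂))
    (hD0 : D ≠ 0)
    (hκ : κ = α₁ + α₂ + β₁ + β₂)
    (P₁ P₂ Q₂ : Fin n → ℂ)
    (hP₁ : P₁ = (α₁ + α₂)⁻¹ •
        (α₁ • ((q₁ ⬝ᵥ p₁)⁻¹ • p₁) + α₂ • ((q₁ ⬝ᵥ p₂)⁻¹ • p₂)))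
    (hP₂ : P₂ = (β₁ + β₂)⁻¹ •
        (β₁ • ((q₂ ⬝ᵥ p₁)⁻¹ • p₁) + β₂ • ((q₂ ⬝ᵥ p₂)⁻¹ • p₂)))
    (hQ₂ : Q₂ = (α₂ + β₂)⁻¹ •
        (α₂ • ((q₁ ⬝ᵥ p₂)⁻¹ • q₁) + β₂ • ((q₂ ⬝ᵥ p₂)⁻¹ • q₂)))
    (α₄ α₅ β₄ β₅ γ₂ : ℂ)
    (hα₄ : α₄ = -β₂ + κ * (α₁ * β₂ * (q₂ ⬝ᵥ p₁) * (q₁ ⬝ᵥ p₂)) / D)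
    (hα₅ : α₅ = -β₁ - κ * (α₂ * β₁ * (q₁ ⬝ᵥ p₁) * (q₂ ⬝ᵥ p₂)) / D)
    (hβ₄ : β₄ = -α₂ - κ * (α₂ * β₁ * (q₁ ⬝ᵥ p₁) * (q₂ ⬝ᵥ p₂)) / D)
    (hβ₅ : β₅ = -α₁ + κ * (α₁ * β₂ * (q₂ ⬝ᵥ p₁) * (q₁ ⬝ᵥ p₂)) / D)
    (hγ₂ : γ₂ = -(α₂ + β₂))
    (hQP₁ : Q₂ ⬝ᵥ P₁ ≠ 0) (hQP₂ : Q₂ ⬝ᵥ P₂ ≠ 0) :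
    Q₂ ⬝ᵥ p₂ = 1 ∧
    α₅ • ((Q₂ ⬝ᵥ P₁)⁻¹ • P₁) + β₅ • ((Q₂ ⬝ᵥ P₂)⁻¹ • P₂) + γ₂ • p₂ = 0 ∧
    α₅ + β₅ = α₂ + β₂ ∧
    α₄ + α₅ = α₁ + α₂ ∧
    β₄ + β₅ = β₁ + β₂ := by
  set a := q₁ ⬝ᵥ p₁ with ha
  set b := q₁ ⬝ᵥ p₂ with hb
  set c := q₂ ⬝ᵥ p₁ with hc
  set d := q₂ ⬝ᵥ p₂ with hd
  have e₀ : Q₂ ⬝ᵥ p₂ = 1 := by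
    rw [hQ₂]
    simp only [smul_dotProduct, add_dotProduct, smul_eq_mul, ← hb, ← hd]
    field_simp
  set s := α₁ + α₂ with hs
  set t := α₂ + β₂ with ht
  set u := β₁ + β₂ with hu
  clear_value a b c d s t u
  clear hp hq
  have hden₁ : t * s * a * b * d ≠ 0 :=
    mul_ne_zero (mul_ne_zero (mul_ne_zero (mul_ne_zero hαβ hαα) h11) h12) h22
  have hden₂ : t * u * b * c * d ≠ 0 :=
    mul_ne_zero (mul_ne_zero (mul_ne_zero (mul_ne_zero hαβ hββ) h12) h21) h22
  have e₁ : Q₂ ⬝ᵥ P₁ = (κ * α₂ * a * d + D) / (t * s * a * b * d) := by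
    rw [hQ₂, hP₁, eq_div_iff hden₁]
    simp only [smul_dotProduct, add_dotProduct, dotProduct_smul,
      dotProduct_add, smul_eq_mul, ← ha, ← hb, ← hc, ← hd]
    field_simp
    simp only [hκ, hD, hs, ht, hu]; ring
  have e₂ : Q₂ ⬝ᵥ P₂ = (κ * β₂ * b * c - D) / (t * u * b * c * d) := by
    rw [hQ₂, hP₂, eq_div_iff hden₂]
    simp only [smul_dotProduct, add_dotProduct, dotProduct_smul,
      dotProduct_add, smul_eq_mul, ← ha, ← hb, ← hc, ← hd]
    field_simp
    simp only [hκ, hD, hs, ht, hu]; ring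
  have hN₁ : κ * α₂ * a * d + D ≠ 0 := by
    intro h
    exact hQP₁ (by rw [e₁, h, zero_div])
  have hN₂ : κ * β₂ * b * c - D ≠ 0 := by
    intro h
    exact hQP₂ (by rw [e₂, h, zero_div])
  set N₁ := κ * α₂ * a * d + D with hn₁
  set N₂ := κ * β₂ * b * c - D with hn₂
  clear_value N₁ N₂
  have e₁' : (Q₂ ⬝ᵥ P₁)⁻¹ = (t * s * a * b * d) / N₁ := by
    rw [e₁, inv_div]
  have e₂' : (Q₂ ⬝ᵥ P₂)⁻¹ = (t * u * b * c * d) / N₂ := by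
    rw [e₂, inv_div]
  have hden₃ : D * (N₁ * (s * b)) * (D * (N₂ * (u * d))) ≠ 0 :=
    mul_ne_zero (mul_ne_zero hD0 (mul_ne_zero hN₁ (mul_ne_zero hαα h12)))
      (mul_ne_zero hD0 (mul_ne_zero hN₂ (mul_ne_zero hββ h22)))
  refine ⟨e₀, ?_, ?_, ?_, ?_⟩
  · rw [e₁', e₂', hP₁, hP₂, hα₅, hβ₅, hγ₂]
    match_scalars
    · field_simp
      subst hn₁ hn₂ hκ hD hs hu ht
      ring
    · field_simp
      subst hn₁ hn₂ hκ hD hs hu ht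
      ring
  · rw [hα₅, hβ₅]
    field_simp
    simp only [hκ, hD, hs, ht, hu]
    ring
  · rw [hα₄, hα₅]
    field_simp
    simp only [hκ, hD, hs, ht, hu]
    ring
  · rw [hβ₄, hβ₅]
    field_simp
    simp only [hκ, hD, hs, ht, hu]
    ring
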